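/- Let f_k(r) = r^k e^{-r}/k! for k ≥ 0. For any s ≥ 0, T > 0, and 0 ≤ t ≤ T, define A_k(s,T,t) = (∫_s^{s+t} f_k(r) dr)/(∫_s^{s+T} f_k(r) dr). Then A_k(s,T,t) ≥ A_{k+1}(s,T,t) for all k = 0, 1, 2, …. -/

import Mathlib

open MeasureTheory

/-- The gamma density `f_k(r) = r^k e^{-r}/k!`. -/
noncomputable def gammaDens (k : ℕ) (r : ℝ) : ℝ := r ^ k * Real.exp (-r) / (Nat.factorial k)

lemma gammaDens_succ (k : ℕ) (r : ℝ) :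
    gammaDens (k + 1) r = r / ((k : ℝ) + 1) * gammaDens k r := by
  unfold gammaDens
  have h1 : (Nat.factorial k : ℝ) ≠ 0 := Nat.cast_ne_zero.mpr (Nat.factorial_ne_zero k)
  have h2 : ((k : ℝ) + 1) ≠ 0 := by positivity
  rw [Nat.factorial_succ]
  push_cast
  field_simp
  ring

lemma gammaDens_cont (k : ℕ) : Continuous (gammaDens k) := by
  unfold gammaDens; fun_prop

lemma gammaDens_nonneg (k : ℕ) {r : ℝ} (hr : 0 ≤ r) : 0 ≤ gammaDens k r := by
  unfold gammaDens; positivity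

theorem stmt_2 (k : ℕ) (s T t : ℝ) (hs : 0 ≤ s) (hT : 0 < T) (ht0 : 0 ≤ t) (htT : t ≤ T) :
    (∫ r in s..(s + t), gammaDens (k + 1) r) / (∫ r in s..(s + T), gammaDens (k + 1) r) ≤
      (∫ r in s..(s + t), gammaDens k r) / (∫ r in s..(s + T), gammaDens k r) := by
  have hst : s ≤ s + t := by linarith
  have hsT : s < s + T := by linarith
  have htT' : s + t ≤ s + T := by linarith
  have hint : ∀ (m : ℕ) (a b : ℝ), IntervalIntegrable (gammaDens m) volume a b :=
    fun m a b => (gammaDens_cont m).intervalIntegrable a b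
  have hpos : ∀ m : ℕ, 0 < ∫ r in s..(s + T), gammaDens m r := by
    intro m
    apply intervalIntegral.intervalIntegral_pos_of_pos_on (hint m s (s + T)) _ hsT
    intro x hx
    have hx0 : 0 < x := lt_of_le_of_lt hs hx.1
    unfold gammaDens
    positivity
  rw [div_le_div_iff₀ (hpos (k + 1)) (hpos k)]
  rw [← intervalIntegral.integral_add_adjacent_intervals (hint k s (s + t)) (hint k (s + t) (s + T)),
    ← intervalIntegral.integral_add_adjacent_intervals (hint (k + 1) s (s + t)) (hint (k + 1) (s + t) (s + T))]
  set A := ∫ r in s..(s + t), gammaDens k r with hA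
  set A' := ∫ r in s..(s + t), gammaDens (k + 1) r with hA'
  set B := ∫ r in (s + t)..(s + T), gammaDens k r with hB
  set B' := ∫ r in (s + t)..(s + T), gammaDens (k + 1) r with hB'
  have hAnn : 0 ≤ A := intervalIntegral.integral_nonneg hst
    (fun x hx => gammaDens_nonneg k (le_trans hs hx.1))
  have hBnn : 0 ≤ B := intervalIntegral.integral_nonneg htT'
    (fun x hx => gammaDens_nonneg k (le_trans (le_trans hs hst) hx.1))
  have hF1 : A' ≤ (s + t) / ((k : ℝ) + 1) * A := by
    rw [hA, ← intervalIntegral.integral_const_mul]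
    apply intervalIntegral.integral_mono_on hst (hint (k + 1) s (s + t))
      ((continuous_const.mul (gammaDens_cont k)).intervalIntegrable _ _)
    intro x hx
    have hx0 : 0 ≤ x := le_trans hs hx.1
    rw [gammaDens_succ]
    have hg : 0 ≤ gammaDens k x := gammaDens_nonneg k hx0
    apply mul_le_mul_of_nonneg_right _ hg
    apply div_le_div_of_nonneg_right _ (by positivity)
    exact hx.2
  have hG1 : (s + t) / ((k : ℝ) + 1) * B ≤ B' := by
    rw [hB, ← intervalIntegral.integral_const_mul]
    apply intervalIntegral.integral_mono_on htT'
      ((continuous_const.mul (gammaDens_cont k)).intervalIntegrable _ _) (hint (k + 1) (s + t) (s + T))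
    intro x hx
    have hx0 : 0 ≤ x := le_trans (le_trans hs hst) hx.1
    rw [gammaDens_succ]
    have hg : 0 ≤ gammaDens k x := gammaDens_nonneg k hx0
    apply mul_le_mul_of_nonneg_right _ hg
    apply div_le_div_of_nonneg_right _ (by positivity)
    exact hx.1
  nlinarith [mul_le_mul_of_nonneg_right hF1 hBnn, mul_le_mul_of_nonneg_left hG1 hAnn]
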